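/- Let (F₁₂,…,F₃₂) solve the six-component ODE system with first-integral values d₁ = F₁₂+F₁₃, d₂ = F₂₃+F₂₁, d₃ = F₃₁+F₃₂, q₁ = F₃₁F₁₃+F₁₂F₂₁+F₂₃F₃₂, q₂ = −d₃q₁+d₁d₂d₃. Define f by f = F₂₃F₃₂ + zF₁₂F₂₁ − q₁/2. Then f' = F₁₂F₂₁, F₂₃F₃₂ = f − zf' + q₁/2, F₁₃F₃₁ = (z−1)f' − f + q₁/2, and f satisfies [z(z−1)f'']² = [q₂ − (d₂−d₃)g₂ − (d₁−d₃)g₁]² − 4f' g₁ g₂, where g₁ = f − zf' + q₁/2 and g₂ = (z−1)f' − f + q₁/2. -/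

import Mathlib

/-- for a solution of the six-component system with first-integral values
`d₁, d₂, d₃, q₁` and `q₂ = -d₃q₁ + d₁d₂d₃`, the function
`f = F₂₃F₃₂ + zF₁₂F₂₁ - q₁/2` satisfies `f' = F₁₂F₂₁`,
`F₂₃F₃₂ = f - zf' + q₁/2`, `F₁₃F₃₁ = (z-1)f' - f + q₁/2`, and
`[z(z-1)f'']² = [q₂ - (d₂-d₃)g₂ - (d₁-d₃)g₁]² - 4f'g₁g₂`
with `g₁ = f - zf' + q₁/2`, `g₂ = (z-1)f' - f + q₁/2`. -/
theorem stmt13 (F12 F21 F13 F31 F23 F32 : ℝ → ℝ) (S : Set ℝ)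
    (hSopen : IsOpen S) (hS : ∀ z ∈ S, z ≠ 0 ∧ z ≠ 1)
    (hode : ∀ z ∈ S,
      HasDerivAt F12 (-(((F12 z * F23 z - F12 z * F13 z) * z - F12 z * F23 z
        + F32 z * F13 z) / (z * (z - 1)))) z ∧
      HasDerivAt F21 (((F21 z * F23 z - F21 z * F13 z) * z + F23 z * F31 z
        - F23 z * F21 z) / (z * (z - 1))) z ∧
      HasDerivAt F13 (((F12 z * F23 z - F12 z * F13 z) * z - F12 z * F23 z
        + F32 z * F13 z) / (z * (z - 1))) z ∧
      HasDerivAt F31 (-(((-(F31 z * F12 z) + F21 z * F32 z) * z + F31 z * F32 z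
        - F21 z * F32 z) / (z * (z - 1)))) z ∧
      HasDerivAt F23 (-(((F21 z * F23 z - F21 z * F13 z) * z + F23 z * F31 z
        - F23 z * F21 z) / (z * (z - 1)))) z ∧
      HasDerivAt F32 (((-(F31 z * F12 z) + F21 z * F32 z) * z + F31 z * F32 z
        - F21 z * F32 z) / (z * (z - 1))) z)
    (d1 d2 d3 q1 q2 : ℝ)
    (hd1 : ∀ z ∈ S, F12 z + F13 z = d1)
    (hd2 : ∀ z ∈ S, F23 z + F21 z = d2)
    (hd3 : ∀ z ∈ S, F31 z + F32 z = d3)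
    (hq1 : ∀ z ∈ S, F31 z * F13 z + F12 z * F21 z + F23 z * F32 z = q1)
    (hq2 : q2 = -(d3 * q1) + d1 * d2 * d3)
    (f : ℝ → ℝ)
    (hf : ∀ z ∈ S, f z = F23 z * F32 z + z * (F12 z * F21 z) - q1 / 2) :
    ∀ z ∈ S,
      HasDerivAt f (F12 z * F21 z) z ∧
      F23 z * F32 z = f z - z * (F12 z * F21 z) + q1 / 2 ∧
      F13 z * F31 z = (z - 1) * (F12 z * F21 z) - f z + q1 / 2 ∧
      ∀ fpp : ℝ, HasDerivAt (fun w => F12 w * F21 w) fpp z →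
        (z * (z - 1) * fpp) ^ 2
          = (q2 - (d2 - d3) * ((z - 1) * (F12 z * F21 z) - f z + q1 / 2)
              - (d1 - d3) * (f z - z * (F12 z * F21 z) + q1 / 2)) ^ 2
            - 4 * (F12 z * F21 z) * (f z - z * (F12 z * F21 z) + q1 / 2)
              * ((z - 1) * (F12 z * F21 z) - f z + q1 / 2) := by
  intro z hz
  obtain ⟨hz0, hz1⟩ := hS z hz
  obtain ⟨h12, h21, h13, h31, h23, h32⟩ := hode z hz
  have hzz : z * (z - 1) ≠ 0 := mul_ne_zero hz0 (sub_ne_zero.mpr hz1)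
  have hder : HasDerivAt (fun w => F23 w * F32 w + w * (F12 w * F21 w) - q1 / 2)
      (F12 z * F21 z) z := by
    have h := ((h23.mul h32).add ((hasDerivAt_id z).mul (h12.mul h21))).sub_const (q1 / 2)
    refine h.congr_deriv ?_
    have hz1' : z - 1 ≠ 0 := sub_ne_zero.mpr hz1
    simp only [id, Pi.mul_apply]
    field_simp
    ring
  have hfeq : f =ᶠ[nhds z] fun w => F23 w * F32 w + w * (F12 w * F21 w) - q1 / 2 :=
    Filter.eventuallyEq_of_mem (hSopen.mem_nhds hz) hf
  have hf' : HasDerivAt f (F12 z * F21 z) z := hder.congr_of_eventuallyEq hfeq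
  refine ⟨hf', by rw [hf z hz]; ring, ?_, ?_⟩
  · linear_combination hq1 z hz + hf z hz
  · intro fpp hfpp
    have hu : fpp = -(((F12 z * F23 z - F12 z * F13 z) * z - F12 z * F23 z
        + F32 z * F13 z) / (z * (z - 1))) * F21 z
        + F12 z * (((F21 z * F23 z - F21 z * F13 z) * z + F23 z * F31 z
        - F23 z * F21 z) / (z * (z - 1))) := hfpp.unique (h12.mul h21)
    have key : z * (z - 1) * fpp = F12 z * F23 z * F31 z - F21 z * F32 z * F13 z := by
      rw [hu]; field_simp; ring
    rw [hf z hz, hq2, ← hd1 z hz, ← hd2 z hz, ← hd3 z hz, ← hq1 z hz, key]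
    ring
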